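/- Let k ≥ 4, p ≥ k+2, q ≥ k+1 and n ≥ 1 be natural numbers, and set d = ⌊(q-1)/(k-2)⌋ (natural number division). If there exists a (p-1, q; k)-coloring of Fin n, then there exists a (p, q; k)-coloring of Fin (d*n). (This is the transfer form of the recurrence r_k(p,q) ≥ ⌊(q−1)/(k−2)⌋·(r_k(p-1,q) − 1) + 1.) -/

import Mathlib

/-- An `(a, b; k)`-coloring of `Fin n`: a 2-coloring of the `k`-subsets
(`true` = red, `false` = blue) such that every `a`-subset contains a blue
`k`-subset and every `b`-subset contains a red `k`-subset. -/
def IsColoring (a b k n : ℕ) (χ : Finset (Fin n) → Bool) : Prop :=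
  (∀ S : Finset (Fin n), S.card = a → ∃ e ⊆ S, e.card = k ∧ χ e = false) ∧
  (∀ S : Finset (Fin n), S.card = b → ∃ e ⊆ S, e.card = k ∧ χ e = true)

section RamseyAux

variable {n d : ℕ}

/-- Projection within a block. -/
def posMap (hn : 0 < n) (v : Fin (d * n)) : Fin n := ⟨v.val % n, Nat.mod_lt _ hn⟩

/-- Embedding of `Fin n` into block `b`. -/
def liftMap (hn : 0 < n) {b : ℕ} (hb : b < d) (x : Fin n) : Fin (d * n) :=
  ⟨n * b + x.val, by
    have h1 := x.isLt
    calc n * b + x.val < n * b + n := by omega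
      _ = n * (b + 1) := by ring
      _ ≤ n * d := Nat.mul_le_mul_left n hb
      _ = d * n := Nat.mul_comm n d⟩

lemma liftMap_injective (hn : 0 < n) {b : ℕ} (hb : b < d) :
    Function.Injective (liftMap (d := d) hn hb) := by
  intro x y hxy
  have := congrArg Fin.val hxy
  simp only [liftMap] at this
  exact Fin.ext (by omega)

lemma blk_liftMap (hn : 0 < n) {b : ℕ} (hb : b < d) (x : Fin n) :
    (liftMap hn hb x).val / n = b := by
  simp only [liftMap]
  rw [Nat.mul_add_div hn, Nat.div_eq_of_lt x.isLt]
  omega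



lemma posMap_liftMap (hn : 0 < n) {b : ℕ} (hb : b < d) (x : Fin n) :
    posMap hn (liftMap hn hb x) = x := by
  apply Fin.ext
  simp only [posMap, liftMap]
  rw [Nat.mul_add_mod, Nat.mod_eq_of_lt x.isLt]

lemma liftMap_posMap (hn : 0 < n) {b : ℕ} (hb : b < d) (v : Fin (d * n))
    (hv : v.val / n = b) : liftMap hn hb (posMap hn v) = v := by
  apply Fin.ext
  simp only [posMap, liftMap]
  rw [← hv, Nat.div_add_mod]

lemma blk_lt (hn : 0 < n) (v : Fin (d * n)) : v.val / n < d :=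
  (Nat.div_lt_iff_lt_mul hn).2 v.isLt

open Classical in
/-- The extended coloring on `d` blocks. -/
noncomputable def chiExt (hn : 0 < n) (χ : Finset (Fin n) → Bool)
    (e : Finset (Fin (d * n))) : Bool :=
  if ∃ b, ∀ v ∈ e, v.val / n = b then χ (e.image (posMap hn))
  else if ∃ b, (e.filter fun v => v.val / n = b).card + 1 = e.card then true else false

lemma chiExt_inblock (hn : 0 < n) (χ : Finset (Fin n) → Bool)
    (e : Finset (Fin (d * n))) {b : ℕ} (hb : ∀ v ∈ e, v.val / n = b) :
    chiExt hn χ e = χ (e.image (posMap hn)) := by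
  rw [chiExt, if_pos ⟨b, hb⟩]

lemma chiExt_cross_blue {k : ℕ} (hk : 4 ≤ k) (hn : 0 < n) (χ : Finset (Fin n) → Bool)
    (e : Finset (Fin (d * n))) (hcard : e.card = k)
    (hsmall : ∀ b, (e.filter fun v => v.val / n = b).card ≤ k - 2) :
    chiExt hn χ e = false := by
  rw [chiExt, if_neg, if_neg]
  · rintro ⟨b, hb⟩
    have h2 := hsmall b
    rw [hcard] at hb
    omega
  · rintro ⟨b, hb⟩
    have h1 : (e.filter fun v => v.val / n = b) = e := Finset.filter_eq_self.2 hb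
    have h2 := hsmall b
    rw [h1, hcard] at h2
    omega

lemma chiExt_cross_red (hn : 0 < n) (χ : Finset (Fin n) → Bool)
    (e : Finset (Fin (d * n))) {b : ℕ}
    {x y : Fin (d * n)} (hx : x ∈ e) (hxb : x.val / n ≠ b)
    (hy : y ∈ e) (hyb : y.val / n = b)
    (hfib : (e.filter fun v => v.val / n = b).card + 1 = e.card) :
    chiExt hn χ e = true := by
  rw [chiExt, if_neg, if_pos ⟨b, hfib⟩]
  rintro ⟨b', hb'⟩
  apply hxb
  rw [hb' x hx, ← hb' y hy, hyb]

/-- Transfer a monochromatic clique from the small coloring into a block. -/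
lemma transfer {k m : ℕ} (hn : 0 < n) {b : ℕ} (hb : b < d)
    (χ : Finset (Fin n) → Bool) (c : Bool)
    (hχ : ∀ S : Finset (Fin n), S.card = m → ∃ e ⊆ S, e.card = k ∧ χ e = c)
    (T : Finset (Fin (d * n))) (hT : ∀ v ∈ T, v.val / n = b) (hm : m ≤ T.card) :
    ∃ e' ⊆ T, e'.card = k ∧ (∀ v ∈ e', v.val / n = b) ∧
      χ (e'.image (posMap hn)) = c := by
  obtain ⟨T', hT'sub, hT'card⟩ := Finset.exists_subset_card_eq hm
  have hT' : ∀ v ∈ T', v.val / n = b := fun v hv => hT v (hT'sub hv)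
  have hinj : Set.InjOn (posMap (d := d) hn) (T' : Set (Fin (d * n))) := by
    intro u hu v hv huv
    have h1 : u.val % n = v.val % n := congrArg Fin.val huv
    have h2 : u.val / n = v.val / n := (hT' u hu).trans (hT' v hv).symm
    apply Fin.ext
    rw [← Nat.div_add_mod u.val n, ← Nat.div_add_mod v.val n, h1, h2]
  have hU : (T'.image (posMap hn)).card = m := by
    rw [Finset.card_image_of_injOn hinj, hT'card]
  obtain ⟨e, heU, hek, hec⟩ := hχ _ hU
  have hfun : (posMap hn ∘ liftMap (d := d) hn hb : Fin n → Fin n) = id :=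
    funext fun x => posMap_liftMap hn hb x
  refine ⟨e.image (liftMap hn hb), ?_, ?_, ?_, ?_⟩
  · intro v hv
    obtain ⟨x, hxe, hxv⟩ := Finset.mem_image.1 hv
    obtain ⟨w, hw, hwx⟩ := Finset.mem_image.1 (heU hxe)
    have : v = w := by rw [← hxv, ← hwx, liftMap_posMap hn hb w (hT' w hw)]
    exact this ▸ hT'sub hw
  · rw [Finset.card_image_of_injective e (liftMap_injective hn hb), hek]
  · intro v hv
    obtain ⟨x, _, hxv⟩ := Finset.mem_image.1 hv
    rw [← hxv]; exact blk_liftMap hn hb x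
  · rw [Finset.image_image, hfun, Finset.image_id, hec]

end RamseyAux

theorem stmt_6 (k p q n : ℕ) (hk : 4 ≤ k)
    (hp : k + 2 ≤ p) (hq : k + 1 ≤ q) (hn : 1 ≤ n)
    (h : ∃ χ : Finset (Fin n) → Bool, IsColoring (p - 1) q k n χ) :
    ∃ χ' : Finset (Fin ((q - 1) / (k - 2) * n)) → Bool,
      IsColoring p q k ((q - 1) / (k - 2) * n) χ' := by
  classical
  obtain ⟨χ, hblue, hred⟩ := h
  set d := (q - 1) / (k - 2) with hd
  have hn0 : 0 < n := hn
  refine ⟨chiExt hn0 χ, ?_, ?_⟩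
  · -- blue condition: every p-set contains a blue k-set
    intro S hS
    by_cases h1 : ∃ b, p - 1 ≤ (S.filter fun v => v.val / n = b).card
    · obtain ⟨b, hbcard⟩ := h1
      have hne : (S.filter fun v => v.val / n = b).Nonempty := by
        rw [← Finset.card_pos]; omega
      obtain ⟨w, hw⟩ := hne
      have hbd : b < d := (Finset.mem_filter.1 hw).2 ▸ blk_lt hn0 w
      obtain ⟨e', he'sub, he'card, he'blk, he'χ⟩ :=
        transfer hn0 hbd χ false hblue _ (fun v hv => (Finset.mem_filter.1 hv).2) hbcard
      refine ⟨e', he'sub.trans (Finset.filter_subset _ _), he'card, ?_⟩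
      rw [chiExt_inblock hn0 χ e' he'blk, he'χ]
    · push_neg at h1
      -- every block has at most p-2 elements of S
      have h1' : ∀ b, (S.filter fun v => v.val / n = b).card ≤ p - 2 := by
        intro b; have := h1 b; omega
      by_cases h2 : ∃ b, k - 1 ≤ (S.filter fun v => v.val / n = b).card
      · -- one big block: take k - c from it, c = min |C| (k-2) from outside
        obtain ⟨b1, hb1⟩ := h2
        set A := S.filter fun v => v.val / n = b1 with hA
        set C := S.filter fun v => ¬ v.val / n = b1 with hC
        have hAC : A.card + C.card = p := by
          rw [hA, hC, Finset.card_filter_add_card_filter_not, hS]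
        have hCcard : 2 ≤ C.card := by
          have := h1' b1; rw [← hA] at this; omega
        set c := min C.card (k - 2) with hc
        obtain ⟨tC, htCsub, htCcard⟩ := Finset.exists_subset_card_eq (s := C) (n := c) (min_le_left _ _)
        obtain ⟨tA, htAsub, htAcard⟩ := Finset.exists_subset_card_eq (s := A) (n := k - c) (by omega)
        have hdisj : Disjoint tA tC := by
          refine Finset.disjoint_left.2 fun v hvA hvC => ?_
          exact (Finset.mem_filter.1 (htCsub hvC)).2 (Finset.mem_filter.1 (htAsub hvA)).2
        refine ⟨tA ∪ tC, ?_, ?_, ?_⟩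
        · exact Finset.union_subset (htAsub.trans (Finset.filter_subset _ _))
            (htCsub.trans (Finset.filter_subset _ _))
        · rw [Finset.card_union_of_disjoint hdisj, htAcard, htCcard]; omega
        · apply chiExt_cross_blue hk hn0 χ _
            (by rw [Finset.card_union_of_disjoint hdisj, htAcard, htCcard]; omega)
          intro b
          by_cases hbb : b = b1
          · rw [hbb]
            have : ((tA ∪ tC).filter fun v => v.val / n = b1) = tA := by
              ext v
              simp only [Finset.mem_filter, Finset.mem_union]
              constructor
              · rintro ⟨hv | hv, hvb⟩
                · exact hv
                · exact absurd hvb (Finset.mem_filter.1 (htCsub hv)).2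
              · intro hv
                exact ⟨Or.inl hv, (Finset.mem_filter.1 (htAsub hv)).2⟩
            rw [this, htAcard]; omega
          · have hsub : ((tA ∪ tC).filter fun v => v.val / n = b) ⊆ tC := by
              intro v hv
              obtain ⟨hv1, hv2⟩ := Finset.mem_filter.1 hv
              rcases Finset.mem_union.1 hv1 with hv | hv
              · exact absurd (hv2.symm.trans (Finset.mem_filter.1 (htAsub hv)).2) hbb
              · exact hv
            calc ((tA ∪ tC).filter fun v => v.val / n = b).card ≤ tC.card :=
                  Finset.card_le_card hsub
              _ ≤ k - 2 := by rw [htCcard]; omega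
      · -- all blocks small: any k-subset works
        push_neg at h2
        obtain ⟨e, hesub, hecard⟩ := Finset.exists_subset_card_eq (s := S) (n := k) (by omega)
        refine ⟨e, hesub, hecard, ?_⟩
        apply chiExt_cross_blue hk hn0 χ _ hecard
        intro b
        have hsub : (e.filter fun v => v.val / n = b) ⊆
            (S.filter fun v => v.val / n = b) := Finset.filter_subset_filter _ hesub
        have := h2 b
        have := Finset.card_le_card hsub
        omega
  · -- red condition: every q-set contains a red k-set
    intro S hS
    -- pigeonhole: some block has ≥ k-1 elements
    have hpig : ∃ b, k - 1 ≤ (S.filter fun v => v.val / n = b).card := by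
      by_contra hcon
      push_neg at hcon
      have hmap : ∀ x ∈ S, x.val / n ∈ Finset.range d :=
        fun x _ => Finset.mem_range.2 (blk_lt hn0 x)
      have hsum := Finset.card_eq_sum_card_fiberwise hmap
      have hbound : ∑ b ∈ Finset.range d, (S.filter fun v => v.val / n = b).card
          ≤ d * (k - 2) := by
        calc ∑ b ∈ Finset.range d, (S.filter fun v => v.val / n = b).card
            ≤ ∑ b ∈ Finset.range d, (k - 2) :=
              Finset.sum_le_sum fun b _ => by have := hcon b; omega
          _ = d * (k - 2) := by rw [Finset.sum_const, Finset.card_range, smul_eq_mul]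
      have hdq : d * (k - 2) ≤ q - 1 := Nat.div_mul_le_self _ _
      rw [hS] at hsum
      omega
    obtain ⟨b, hb⟩ := hpig
    have hne : (S.filter fun v => v.val / n = b).Nonempty := by
      rw [← Finset.card_pos]; omega
    obtain ⟨w, hw⟩ := hne
    have hbd : b < d := (Finset.mem_filter.1 hw).2 ▸ blk_lt hn0 w
    by_cases hall : ∀ v ∈ S, v.val / n = b
    · obtain ⟨e', he'sub, he'card, he'blk, he'χ⟩ :=
        transfer hn0 hbd χ true hred S hall (le_of_eq hS.symm)
      exact ⟨e', he'sub, he'card, by rw [chiExt_inblock hn0 χ e' he'blk, he'χ]⟩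
    · push_neg at hall
      obtain ⟨x, hxS, hxb⟩ := hall
      obtain ⟨t, htsub, htcard⟩ := Finset.exists_subset_card_eq
        (s := S.filter fun v => v.val / n = b) (n := k - 1) hb
      have hxt : x ∉ t := fun hx => hxb (Finset.mem_filter.1 (htsub hx)).2
      have htblk : ∀ v ∈ t, v.val / n = b := fun v hv => (Finset.mem_filter.1 (htsub hv)).2
      have htne : t.Nonempty := by rw [← Finset.card_pos, htcard]; omega
      obtain ⟨y, hy⟩ := htne
      refine ⟨insert x t, ?_, ?_, ?_⟩
      · exact Finset.insert_subset hxS (htsub.trans (Finset.filter_subset _ _))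
      · rw [Finset.card_insert_of_notMem hxt, htcard]; omega
      · have hfib : ((insert x t).filter fun v => v.val / n = b) = t := by
          ext v
          simp only [Finset.mem_filter, Finset.mem_insert]
          constructor
          · rintro ⟨hv | hv, hvb⟩
            · exact absurd (hv ▸ hvb) hxb
            · exact hv
          · intro hv; exact ⟨Or.inr hv, htblk v hv⟩
        apply chiExt_cross_red hn0 χ _ (Finset.mem_insert_self x t) hxb
          (Finset.mem_insert_of_mem hy) (htblk y hy)
        rw [hfib, htcard, Finset.card_insert_of_notMem hxt, htcard]
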